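/- For a cartesian monoidal category C (acting on itself by product), there is a natural isomorphism Optic((X,X'), (Y,Y')) ≅ C(X, Y) × C(X × Y', X'); i.e., optics over a cartesian category are equivalent to lenses. -/

import Mathlib

open CategoryTheory MonoidalCategory Limits

universe v u

attribute [local instance] CartesianMonoidalCategory.ofHasFiniteProducts

variable {C : Type u} [Category.{v} C] [HasFiniteProducts C]

structure OpticRep (X X' Y Y' : C) where
  M : C
  f : X ⟶ M ⊗ Y
  f' : M ⊗ Y' ⟶ X'

def OpticRel (X X' Y Y' : C) : OpticRep X X' Y Y' → OpticRep X X' Y Y' → Prop :=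
  fun r₁ r₂ => ∃ h : r₁.M ⟶ r₂.M,
    r₂.f = r₁.f ≫ (h ▷ Y) ∧ r₁.f' = (h ▷ Y') ≫ r₂.f'

def OpticHom (X X' Y Y' : C) : Type _ := Quot (OpticRel X X' Y Y')

lemma wr_eq {A B Y : C} (h : A ⟶ B) : (h ▷ Y) = prod.map h (𝟙 Y) := by
  apply prod.hom_ext
  · erw [prod.map_fst]; exact CartesianMonoidalCategory.whiskerRight_fst _ _
  · erw [prod.map_snd]; exact (CartesianMonoidalCategory.whiskerRight_snd _ _).trans (Category.comp_id _).symm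

noncomputable def opticToLens (X X' Y Y' : C) : OpticHom X X' Y Y' → ((X ⟶ Y) × (X ⨯ Y' ⟶ X')) :=
  Quot.lift (fun r => (r.f ≫ prod.snd, prod.map (r.f ≫ prod.fst) (𝟙 Y') ≫ r.f'))
    (by
      rintro r₁ r₂ ⟨h, hf, hf'⟩
      rw [wr_eq] at hf hf'
      have key : ∀ (g : X ⟶ r₁.M ⨯ Y) (k : r₂.M ⨯ Y' ⟶ X'),
          (g ≫ prod.snd, prod.map (g ≫ prod.fst) (𝟙 Y') ≫ prod.map h (𝟙 Y') ≫ k) =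
          ((g ≫ prod.map h (𝟙 Y)) ≫ prod.snd, prod.map ((g ≫ prod.map h (𝟙 Y)) ≫ prod.fst) (𝟙 Y') ≫ k) := by
        intro g k
        apply Prod.ext <;> simp [prod.map_map_assoc, Category.assoc]
      rw [hf, hf']
      exact key r₁.f r₂.f')

noncomputable def lensToOptic (X X' Y Y' : C) : ((X ⟶ Y) × (X ⨯ Y' ⟶ X')) → OpticHom X X' Y Y' :=
  fun p => Quot.mk _ ⟨X, prod.lift (𝟙 X) p.1, p.2⟩

/-- over a cartesian monoidal category, optics are lenses: there is
a natural bijection `Optic((X,X'),(Y,Y')) ≅ C(X,Y) × C(X × Y', X')`, sending the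
class of `(M, f, f')` to `(π_Y ∘ f, f' ∘ (π_M ∘ f × id))`. -/
theorem optics_are_lenses (X X' Y Y' : C) :
    ∃ e : OpticHom X X' Y Y' ≃ ((X ⟶ Y) × (X ⨯ Y' ⟶ X')),
      ∀ r : OpticRep X X' Y Y',
        e (Quot.mk _ r) =
          (r.f ≫ prod.snd, prod.map (r.f ≫ prod.fst) (𝟙 Y') ≫ r.f') := by
  refine ⟨⟨opticToLens X X' Y Y', lensToOptic X X' Y Y', ?_, ?_⟩, fun r => rfl⟩
  · rintro ⟨r⟩
    apply Quot.sound
    refine ⟨r.f ≫ prod.fst, ?_, ?_⟩ <;> rw [wr_eq]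
    · have key : ∀ g : X ⟶ r.M ⨯ Y, g = prod.lift (𝟙 X) (g ≫ prod.snd) ≫ prod.map (g ≫ prod.fst) (𝟙 Y) := by
        intro g; apply Limits.prod.hom_ext <;> simp
        · erw [prod.lift_fst]
        · erw [prod.lift_snd]
      exact key r.f
    · rfl
  · rintro ⟨g, k⟩
    simp [opticToLens, lensToOptic, prod.map_id_id]
    have key : ∀ (g : X ⟶ Y) (k : X ⨯ Y' ⟶ X'), prod.lift (𝟙 X) g ≫ prod.snd = g ∧ prod.map (prod.lift (𝟙 X) g ≫ prod.fst) (𝟙 Y') ≫ k = k := by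
      intro g k; exact ⟨by erw [prod.lift_snd], by erw [prod.lift_fst, prod.map_id_id, Category.id_comp]⟩
    exact key g k
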